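/- Row-sum preservation of the Schur complement: let L be the Laplacian of a connected weighted graph with block form L = [[P, Qᵀ],[Q, R]] with R invertible. Then the Schur complement L̃ = P - Qᵀ R⁻¹ Q has all column sums equal to zero, has nonpositive off-diagonal entries, and dim ker L̃ = 1 (so L̃ is the Laplacian of a connected weighted graph on the first r vertices). -/

import Mathlib

open Matrix

set_option linter.unusedSectionVars false

section Helpers

variable {n : Type*} [Fintype n] [DecidableEq n]

/-- Quadratic form nonnegativity for symmetric, zero-row-sum,
nonpositive-off-diagonal matrices. -/
lemma laplacian_quad_nonneg (A : Matrix n n ℝ) (hs : A.IsSymm)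
    (h1 : ∀ i, ∑ j, A i j = 0)
    (hoff : ∀ i j, i ≠ j → A i j ≤ 0) (v : n → ℝ) :
    0 ≤ v ⬝ᵥ A.mulVec v := by
  have h2 : ∀ j, ∑ i, A i j = 0 := by
    intro j
    calc ∑ i, A i j = ∑ i, A j i := by
          refine Finset.sum_congr rfl fun i _ => ?_
          exact hs.apply j i
      _ = 0 := h1 j
  have key : ∑ i, ∑ j, A i j * (v i - v j) ^ 2 = -2 * (v ⬝ᵥ A.mulVec v) := by
    have expand : ∀ i j, A i j * (v i - v j) ^ 2
        = A i j * v i ^ 2 + A i j * v j ^ 2 - 2 * (v i * (A i j * v j)) := by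
      intro i j; ring
    simp_rw [expand, Finset.sum_sub_distrib, Finset.sum_add_distrib]
    have e1 : ∑ i, ∑ j, A i j * v i ^ 2 = 0 := by
      refine Finset.sum_eq_zero fun i _ => ?_
      rw [← Finset.sum_mul, h1 i, zero_mul]
    have e2 : ∑ i, ∑ j, A i j * v j ^ 2 = 0 := by
      rw [Finset.sum_comm]
      refine Finset.sum_eq_zero fun j _ => ?_
      rw [← Finset.sum_mul, h2 j, zero_mul]
    have e3 : ∑ i, ∑ j, 2 * (v i * (A i j * v j)) = 2 * (v ⬝ᵥ A.mulVec v) := by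
      simp only [dotProduct, mulVec, Finset.mul_sum]
    rw [e1, e2, e3]; ring
  have hle : ∑ i, ∑ j, A i j * (v i - v j) ^ 2 ≤ 0 := by
    refine Finset.sum_nonpos fun i _ => Finset.sum_nonpos fun j _ => ?_
    rcases eq_or_ne i j with rfl | hij
    · simp
    · exact mul_nonpos_of_nonpos_of_nonneg (hoff i j hij) (sq_nonneg _)
  nlinarith [key, hle]

/-- Inverse-positivity for M-matrices: if `A` is positive definite with
nonpositive off-diagonal entries and `A x = b` with `b ≥ 0`, then `x ≥ 0`. -/
lemma mmatrix_inv_nonneg (A : Matrix n n ℝ)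
    (hPD : ∀ w : n → ℝ, w ≠ 0 → 0 < w ⬝ᵥ A.mulVec w)
    (hoff : ∀ i j, i ≠ j → A i j ≤ 0) (x b : n → ℝ) (hb : ∀ i, 0 ≤ b i)
    (hx : A.mulVec x = b) : ∀ i, 0 ≤ x i := by
  set xp : n → ℝ := fun k => max (x k) 0 with hxp_def
  set xm : n → ℝ := fun k => max (-x k) 0 with hxm_def
  have hxp0 : ∀ k, 0 ≤ xp k := fun k => le_max_right _ _
  have hxm0 : ∀ k, 0 ≤ xm k := fun k => le_max_right _ _
  have hdecomp : x = fun k => xp k - xm k := by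
    funext k
    rcases le_total (x k) 0 with h | h
    · simp [hxp_def, hxm_def, max_eq_right h, max_eq_left (neg_nonneg.2 h)]
    · simp [hxp_def, hxm_def, max_eq_left h, max_eq_right (neg_nonpos.2 h)]
  have hdisj : ∀ k, xm k * xp k = 0 := by
    intro k
    rcases le_total (x k) 0 with h | h
    · simp [hxp_def, max_eq_right h]
    · simp [hxm_def, max_eq_right (neg_nonpos.2 h)]
  have hmv : A.mulVec xp - A.mulVec xm = b := by
    rw [← mulVec_sub]
    have : (xp - xm) = x := by funext k; simp [hdecomp]
    rw [this, hx]
  have h1 : xm ⬝ᵥ b ≥ 0 := Finset.sum_nonneg fun k _ => mul_nonneg (hxm0 k) (hb k)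
  have h2 : xm ⬝ᵥ A.mulVec xp ≤ 0 := by
    refine Finset.sum_nonpos fun k _ => ?_
    rw [mulVec, dotProduct, Finset.mul_sum]
    refine Finset.sum_nonpos fun l _ => ?_
    rcases eq_or_ne k l with rfl | hkl
    · have : xm k * (A k k * xp k) = A k k * (xm k * xp k) := by ring
      rw [this, hdisj k, mul_zero]
    · have h4 : A k l * xp l ≤ 0 := mul_nonpos_of_nonpos_of_nonneg (hoff k l hkl) (hxp0 l)
      exact mul_nonpos_iff.mpr (Or.inl ⟨hxm0 k, h4⟩)
  have h3 : xm ⬝ᵥ A.mulVec xm ≤ 0 := by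
    have : xm ⬝ᵥ A.mulVec xm = xm ⬝ᵥ A.mulVec xp - xm ⬝ᵥ b := by
      rw [← hmv, dotProduct_sub]; ring
    rw [this]; linarith
  have hxm_zero : xm = 0 := by
    by_contra h
    exact absurd h3 (not_le.2 (hPD xm h))
  intro i
  have : xm i = 0 := congrFun hxm_zero i
  have : max (-x i) 0 = 0 := this
  nlinarith [le_max_left (-x i) (0:ℝ), this]

end Helpers

/-- the Schur complement of the lower-right block of a connected
graph Laplacian has zero column sums, nonpositive off-diagonal entries, and
one-dimensional kernel (spanned by the constants). -/
theorem schur_complement_laplacian {α β : Type*} [Fintype α] [Fintype β]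
    [DecidableEq α] [DecidableEq β] [Nonempty α] [Nonempty β]
    (L : Matrix (α ⊕ β) (α ⊕ β) ℝ)
    (hsym : L.IsSymm)
    (hrow : L.mulVec (fun _ => (1 : ℝ)) = 0)
    (hoff : ∀ i j : α ⊕ β, i ≠ j → L i j ≤ 0)
    (hker : ∀ v : α ⊕ β → ℝ, L.mulVec v = 0 ↔ ∃ c : ℝ, v = fun _ => c)
    (hR : IsUnit (L.toBlocks₂₂).det)
    (Ltilde : Matrix α α ℝ)
    (hLt : Ltilde = L.toBlocks₁₁ - L.toBlocks₁₂ * (L.toBlocks₂₂)⁻¹ * L.toBlocks₂₁) :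
    (∀ j : α, ∑ i : α, Ltilde i j = 0) ∧
    (∀ i j : α, i ≠ j → Ltilde i j ≤ 0) ∧
    (∀ v : α → ℝ, Ltilde.mulVec v = 0 ↔ ∃ c : ℝ, v = fun _ => c) := by
  classical
  set P := L.toBlocks₁₁ with hPdef
  set Qt := L.toBlocks₁₂ with hQtdef
  set Q := L.toBlocks₂₁ with hQdef
  set R := L.toBlocks₂₂ with hRdef
  have hLsym : ∀ i j, L i j = L j i := fun i j => hsym.apply j i
  have h1 : ∀ i, ∑ j, L i j = 0 := by
    intro i
    have := congrFun hrow i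
    simpa [mulVec, dotProduct] using this
  have hherm : L.IsHermitian := by
    rw [Matrix.IsHermitian, conjTranspose_eq_transpose_of_trivial]; exact hsym
  have hquad : ∀ v : α ⊕ β → ℝ, 0 ≤ v ⬝ᵥ L.mulVec v :=
    laplacian_quad_nonneg L hsym h1 hoff
  have hpsd : L.PosSemidef := .of_dotProduct_mulVec_nonneg hherm fun x => by simpa using hquad x
  -- block entry facts
  have hPapp : ∀ a b, P a b = L (Sum.inl a) (Sum.inl b) := fun a b => rfl
  have hQtapp : ∀ a b, Qt a b = L (Sum.inl a) (Sum.inr b) := fun a b => rfl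
  have hQapp : ∀ b a, Q b a = L (Sum.inr b) (Sum.inl a) := fun b a => rfl
  have hRapp : ∀ b b', R b b' = L (Sum.inr b) (Sum.inr b') := fun b b' => rfl
  have hQle : ∀ b a, Q b a ≤ 0 := fun b a => hoff _ _ (by simp)
  have hQtle : ∀ a b, Qt a b ≤ 0 := fun a b => hoff _ _ (by simp)
  have hRoff : ∀ b b' : β, b ≠ b' → R b b' ≤ 0 := fun b b' h =>
    hoff _ _ (by simpa using h)
  -- R is positive definite
  have hRPD : ∀ w : β → ℝ, w ≠ 0 → 0 < w ⬝ᵥ R.mulVec w := by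
    intro w hw
    set v : α ⊕ β → ℝ := Sum.elim 0 w with hv
    have hvq : v ⬝ᵥ L.mulVec v = w ⬝ᵥ R.mulVec w := by
      simp [hv, dotProduct, mulVec, Fintype.sum_sum_type, hRapp]
    have h0 : 0 ≤ w ⬝ᵥ R.mulVec w := hvq ▸ hquad v
    rcases h0.lt_or_eq with h | h
    · exact h
    · exfalso
      have hz : L.mulVec v = 0 := by
        refine (hpsd.dotProduct_mulVec_zero_iff v).mp ?_
        simpa [hvq] using h.symm
      obtain ⟨c, hc⟩ := (hker v).mp hz
      have hc0 : c = 0 := by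
        have := congrFun hc (Sum.inl (Classical.arbitrary α))
        simpa [hv] using this.symm
      apply hw; funext b
      have := congrFun hc (Sum.inr b)
      simpa [hv, hc0] using this
  -- entries of R⁻¹ are nonnegative
  have hRR : R * R⁻¹ = 1 := Matrix.mul_nonsing_inv R hR
  have hRinv : ∀ k l, 0 ≤ R⁻¹ k l := by
    intro k l
    have hx : R.mulVec (fun m => R⁻¹ m l) = fun m => (1 : Matrix β β ℝ) m l := by
      funext m
      show ∑ j, R m j * R⁻¹ j l = _
      rw [← Matrix.mul_apply, hRR]
    refine mmatrix_inv_nonneg R hRPD hRoff _ _ (fun m => ?_) hx k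
    by_cases h : m = l <;> simp [Matrix.one_apply, h]
  -- block row-sum identities
  have hP1 : P.mulVec (fun _ => (1:ℝ)) = -(Qt.mulVec (fun _ => (1:ℝ))) := by
    funext a
    have := h1 (Sum.inl a)
    rw [Fintype.sum_sum_type] at this
    simp only [mulVec, dotProduct, Pi.neg_apply, mul_one, hPapp, hQtapp]
    linarith
  have hQ1 : Q.mulVec (fun _ => (1:ℝ)) = -(R.mulVec (fun _ => (1:ℝ))) := by
    funext b
    have := h1 (Sum.inr b)
    rw [Fintype.sum_sum_type] at this
    simp only [mulVec, dotProduct, Pi.neg_apply, mul_one, hQapp, hRapp]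
    linarith
  -- Ltilde kills the constant vector
  have hLt1 : Ltilde.mulVec (fun _ => (1:ℝ)) = 0 := by
    rw [hLt, sub_mulVec, ← mulVec_mulVec, ← mulVec_mulVec, hQ1, mulVec_neg,
      mulVec_mulVec, nonsing_inv_mul R hR, one_mulVec, mulVec_neg, hP1]
    simp
  -- Ltilde is symmetric
  have hPsym : Pᵀ = P := by
    funext a b; simp only [transpose_apply, hPapp]; exact hLsym _ _
  have hRsym : Rᵀ = R := by
    funext b b'; simp only [transpose_apply, hRapp]; exact hLsym _ _
  have hQtT : Qᵀ = Qt := by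
    funext a b; simp only [transpose_apply, hQapp, hQtapp]; exact hLsym _ _
  have hQT : Qtᵀ = Q := by rw [← hQtT, transpose_transpose]
  have hLtsym : Ltildeᵀ = Ltilde := by
    rw [hLt, transpose_sub, transpose_mul, transpose_mul, transpose_nonsing_inv,
      hRsym, hPsym, hQtT, hQT, Matrix.mul_assoc]
  have hLtapp : ∀ i j, Ltilde i j = Ltilde j i := by
    intro i j
    conv_lhs => rw [← hLtsym]
    rw [transpose_apply]
  -- Part 1
  have part1 : ∀ j : α, ∑ i : α, Ltilde i j = 0 := by
    intro j
    have hrowsum : ∑ i, Ltilde j i = 0 := by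
      have := congrFun hLt1 j
      simpa [mulVec, dotProduct] using this
    calc ∑ i, Ltilde i j = ∑ i, Ltilde j i :=
          Finset.sum_congr rfl fun i _ => hLtapp i j
      _ = 0 := hrowsum
  -- Part 2
  have part2 : ∀ i j : α, i ≠ j → Ltilde i j ≤ 0 := by
    intro i j hij
    rw [hLt]
    have hS : 0 ≤ (Qt * R⁻¹ * Q) i j := by
      rw [Matrix.mul_apply]
      refine Finset.sum_nonneg fun l _ => ?_
      have h5 : (Qt * R⁻¹) i l ≤ 0 := by
        rw [Matrix.mul_apply]
        exact Finset.sum_nonpos fun k _ =>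
          mul_nonpos_of_nonpos_of_nonneg (hQtle i k) (hRinv k l)
      exact mul_nonneg_iff.mpr (Or.inr ⟨h5, hQle l j⟩)
    have hPij : P i j ≤ 0 := by
      rw [hPapp]; exact hoff _ _ (by simp [hij])
    simp only [Matrix.sub_apply]
    linarith
  -- Part 3
  have part3 : ∀ v : α → ℝ, Ltilde.mulVec v = 0 ↔ ∃ c : ℝ, v = fun _ => c := by
    intro v
    constructor
    · intro hv
      set w : β → ℝ := -(R⁻¹.mulVec (Q.mulVec v)) with hw
      set u : α ⊕ β → ℝ := Sum.elim v w with hu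
      have hQR : Q.mulVec v + R.mulVec w = 0 := by
        rw [hw, mulVec_neg, mulVec_mulVec, mulVec_mulVec, hRR, Matrix.one_mul]
        simp
      have hPQ : P.mulVec v + Qt.mulVec w = 0 := by
        have hv' : P.mulVec v - (Qt * R⁻¹ * Q).mulVec v = 0 := by
          rw [← sub_mulVec, ← hLt]; exact hv
        have hQtw : Qt.mulVec w = -((Qt * R⁻¹ * Q).mulVec v) := by
          rw [hw, mulVec_neg, mulVec_mulVec, mulVec_mulVec, Matrix.mul_assoc]
        rw [hQtw]
        funext a
        have := congrFun hv' a
        simp only [Pi.sub_apply, Pi.add_apply, Pi.neg_apply, Pi.zero_apply] at this ⊢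
        linarith
      have hLu : L.mulVec u = 0 := by
        funext i
        rcases i with a | b
        · have expand : (L.mulVec u) (Sum.inl a) = (P.mulVec v) a + (Qt.mulVec w) a := by
            simp [mulVec, dotProduct, Fintype.sum_sum_type, hu, hPapp, hQtapp]
          rw [expand]
          have := congrFun hPQ a
          simpa using this
        · have expand : (L.mulVec u) (Sum.inr b) = (Q.mulVec v) b + (R.mulVec w) b := by
            simp [mulVec, dotProduct, Fintype.sum_sum_type, hu, hQapp, hRapp]
          rw [expand]
          have := congrFun hQR b
          simpa using this
      obtain ⟨c, hc⟩ := (hker u).mp hLu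
      exact ⟨c, funext fun a => congrFun hc (Sum.inl a)⟩
    · rintro ⟨c, rfl⟩
      have hc : (fun _ : α => c) = c • (fun _ : α => (1:ℝ)) := by
        funext a; simp
      rw [hc, mulVec_smul, hLt1, smul_zero]
  exact ⟨part1, part2, part3⟩
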